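/- The map G₁ sends line segments to line segments: if (r₁,r₂) and (r₁′,r₂′) with r₁, r₁′ > 0 satisfy a₁r₁ + a₂r₂ = 1 and a₁r₁′ + a₂r₂′ = 1 for constants a₁, a₂, then the images d = G₁(r₁,r₂) and d′ = G₁(r₁′,r₂′) satisfy a₁′d₁ + a₂′d₂ = 1 and a₁′d₁′ + a₂′d₂′ = 1, where a₂′ = a₂r₂*/(a₁τ₁ + a₂τ₂) and a₁′ = (1 − a₂r₂*)/(a₁τ₁ + a₂τ₂), provided a₁τ₁ + a₂τ₂ ≠ 0. -/

import Mathlib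

noncomputable def G₁ (τ₁ τ₂ r₂star : ℝ) (r : ℝ × ℝ) : ℝ × ℝ :=
  (τ₁ / r.1, τ₂ / r₂star + (r₂star - r.2) * τ₁ / (r₂star * r.1))

lemma G₁_affine_aux (τ₁ τ₂ r₂star : ℝ) (hr₂star : 0 < r₂star)
    (a₁ a₂ r₁ r₂ : ℝ) (h₁ : 0 < r₁)
    (hline : a₁ * r₁ + a₂ * r₂ = 1)
    (hden : a₁ * τ₁ + a₂ * τ₂ ≠ 0) :
    ((1 - a₂ * r₂star) / (a₁ * τ₁ + a₂ * τ₂)) * (G₁ τ₁ τ₂ r₂star (r₁, r₂)).1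
      + (a₂ * r₂star / (a₁ * τ₁ + a₂ * τ₂)) * (G₁ τ₁ τ₂ r₂star (r₁, r₂)).2 = 1 := by
  simp only [G₁]
  field_simp
  linear_combination (-τ₁) * hline

theorem G₁_affine_on_lines (τ₁ τ₂ r₂star : ℝ)
    (hτ₁ : 0 < τ₁) (hτ₂ : 0 < τ₂) (hr₂star : 0 < r₂star)
    (a₁ a₂ r₁ r₂ r₁' r₂' : ℝ) (h₁ : 0 < r₁) (h₁' : 0 < r₁')
    (hline : a₁ * r₁ + a₂ * r₂ = 1) (hline' : a₁ * r₁' + a₂ * r₂' = 1)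
    (hden : a₁ * τ₁ + a₂ * τ₂ ≠ 0) :
    ((1 - a₂ * r₂star) / (a₁ * τ₁ + a₂ * τ₂)) * (G₁ τ₁ τ₂ r₂star (r₁, r₂)).1
      + (a₂ * r₂star / (a₁ * τ₁ + a₂ * τ₂)) * (G₁ τ₁ τ₂ r₂star (r₁, r₂)).2 = 1 ∧
    ((1 - a₂ * r₂star) / (a₁ * τ₁ + a₂ * τ₂)) * (G₁ τ₁ τ₂ r₂star (r₁', r₂')).1
      + (a₂ * r₂star / (a₁ * τ₁ + a₂ * τ₂)) * (G₁ τ₁ τ₂ r₂star (r₁', r₂')).2 = 1 := by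
  exact ⟨G₁_affine_aux τ₁ τ₂ r₂star hr₂star a₁ a₂ r₁ r₂ h₁ hline hden,
    G₁_affine_aux τ₁ τ₂ r₂star hr₂star a₁ a₂ r₁' r₂' h₁' hline' hden⟩
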